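/- Let R1 ⊆ α₁ × γ, R2 ⊆ α₂ × γ, S ⊆ β × γ be finite relations, let Star = {(x1,x2,y,z) : (x1,z) ∈ R1, (x2,z) ∈ R2, (y,z) ∈ S} and let StarG = {(x1,x2) : ∃ y z, (x1,x2,y,z) ∈ Star}. Then |StarG| ≤ |π_Z(S)|^{1/3} · (Σ_{z ∈ γ} |{x1 : (x1,z) ∈ R1}|³)^{1/3} · (Σ_{z ∈ γ} |{x2 : (x2,z) ∈ R2}|³)^{1/3}, where π_Z(S) = {z : ∃ y, (y,z) ∈ S} is the active domain of the Z-column of S. (The improved group-by q-inequality |StarG| ≤ |Dom(S.Z)|^{1/3} · ‖deg_{R1}(X1|Z)‖_3 · ‖deg_{R2}(X2|Z)‖_3, which implies the bound with |S|^{1/3} since |π_Z(S)| ≤ |S|.) -/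
import Mathlib

open Finset Real

/-- The improved group-by q-inequality
`|StarG| ≤ |Dom(S.Z)|^{1/3} · ‖deg_{R1}(X1|Z)‖_3 · ‖deg_{R2}(X2|Z)‖_3`, where
`Dom(S.Z) = π_Z(S)` is the active domain of the `Z`-column of `S`. -/
theorem star_groupby_domain_bound {α₁ α₂ β γ : Type*}
    [Fintype α₁] [Fintype α₂] [Fintype β] [Fintype γ]
    [DecidableEq α₁] [DecidableEq α₂] [DecidableEq β] [DecidableEq γ]
    (R1 : Finset (α₁ × γ)) (R2 : Finset (α₂ × γ)) (S : Finset (β × γ)) :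
    ((Finset.univ.filter
        (fun t : α₁ × α₂ =>
          ∃ y : β, ∃ z : γ, (t.1, z) ∈ R1 ∧ (t.2, z) ∈ R2 ∧ (y, z) ∈ S)).card : ℝ)
    ≤ ((S.image Prod.snd).card : ℝ) ^ ((1 : ℝ) / 3)
      * (∑ z, ((R1.filter (fun t => t.2 = z)).card : ℝ) ^ 3) ^ ((1 : ℝ) / 3)
      * (∑ z, ((R2.filter (fun t => t.2 = z)).card : ℝ) ^ 3) ^ ((1 : ℝ) / 3) := by
  classical
  set D := S.image Prod.snd with hD
  set a : γ → ℝ := fun z => ((R1.filter (fun t => t.2 = z)).card : ℝ) with ha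
  set b : γ → ℝ := fun z => ((R2.filter (fun t => t.2 = z)).card : ℝ) with hb
  have hanon : ∀ z, 0 ≤ a z := fun z => Nat.cast_nonneg _
  have hbnon : ∀ z, 0 ≤ b z := fun z => Nat.cast_nonneg _
  -- Step 1: card bound
  have hsub : (Finset.univ.filter
        (fun t : α₁ × α₂ =>
          ∃ y : β, ∃ z : γ, (t.1, z) ∈ R1 ∧ (t.2, z) ∈ R2 ∧ (y, z) ∈ S))
      ⊆ D.biUnion (fun z =>
        ((R1.filter (fun t => t.2 = z)).image Prod.fst) ×ˢ
        ((R2.filter (fun t => t.2 = z)).image Prod.fst)) := by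
    intro t ht
    simp only [mem_filter, mem_univ, true_and] at ht
    obtain ⟨y, z, h1, h2, h3⟩ := ht
    refine mem_biUnion.2 ⟨z, mem_image.2 ⟨(y, z), h3, rfl⟩, ?_⟩
    refine mem_product.2 ⟨mem_image.2 ⟨(t.1, z), ?_, rfl⟩, mem_image.2 ⟨(t.2, z), ?_, rfl⟩⟩
    · exact mem_filter.2 ⟨h1, rfl⟩
    · exact mem_filter.2 ⟨h2, rfl⟩
  have hstep1 : ((Finset.univ.filter
        (fun t : α₁ × α₂ =>
          ∃ y : β, ∃ z : γ, (t.1, z) ∈ R1 ∧ (t.2, z) ∈ R2 ∧ (y, z) ∈ S)).card : ℝ)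
      ≤ ∑ z ∈ D, a z * b z := by
    have h1 := card_le_card hsub
    have h2 := card_biUnion_le (s := D) (t := fun z =>
        ((R1.filter (fun t => t.2 = z)).image Prod.fst) ×ˢ
        ((R2.filter (fun t => t.2 = z)).image Prod.fst))
    have h3 : ∑ z ∈ D, (((R1.filter (fun t => t.2 = z)).image Prod.fst) ×ˢ
        ((R2.filter (fun t => t.2 = z)).image Prod.fst)).card
        ≤ ∑ z ∈ D, (R1.filter (fun t => t.2 = z)).card * (R2.filter (fun t => t.2 = z)).card := by
      refine sum_le_sum fun z _ => ?_
      rw [card_product]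
      exact Nat.mul_le_mul (card_image_le) (card_image_le)
    have := (h1.trans h2).trans h3
    calc ((Finset.univ.filter
        (fun t : α₁ × α₂ =>
          ∃ y : β, ∃ z : γ, (t.1, z) ∈ R1 ∧ (t.2, z) ∈ R2 ∧ (y, z) ∈ S)).card : ℝ)
        ≤ ((∑ z ∈ D, (R1.filter (fun t => t.2 = z)).card * (R2.filter (fun t => t.2 = z)).card : ℕ) : ℝ) := by
          exact_mod_cast this
      _ = ∑ z ∈ D, a z * b z := by push_cast [ha, hb]; rfl
  -- Step 2: Hölder
  have hpq : Real.HolderConjugate 3 (3/2) := by constructor <;> norm_num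
  have H1 : ∑ z ∈ D, a z * b z
      ≤ (∑ z ∈ D, a z ^ (3:ℝ)) ^ ((1:ℝ)/3) * (∑ z ∈ D, b z ^ ((3:ℝ)/2)) ^ ((1:ℝ)/(3/2)) := by
    exact inner_le_Lp_mul_Lq_of_nonneg D hpq (fun i _ => hanon i) (fun i _ => hbnon i)
  have hpq2 : Real.HolderConjugate 2 2 := by constructor <;> norm_num
  have H2 : ∑ z ∈ D, b z ^ ((3:ℝ)/2)
      ≤ ((D.card : ℝ)) ^ ((1:ℝ)/2) * (∑ z ∈ D, b z ^ (3:ℝ)) ^ ((1:ℝ)/2) := by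
    have := inner_le_Lp_mul_Lq_of_nonneg (f := fun _ => (1:ℝ)) (g := fun z => b z ^ ((3:ℝ)/2))
      D hpq2 (fun i _ => zero_le_one) (fun i _ => rpow_nonneg (hbnon i) _)
    simp only [one_mul] at this
    refine this.trans_eq ?_
    congr 1
    · congr 1
      simp
    · congr 1
      refine sum_congr rfl fun z _ => ?_
      rw [← Real.rpow_mul (hbnon z)]
      norm_num
  have hsum3b : 0 ≤ ∑ z ∈ D, b z ^ (3:ℝ) := sum_nonneg fun z _ => rpow_nonneg (hbnon z) _
  have H3 : (∑ z ∈ D, b z ^ ((3:ℝ)/2)) ^ ((1:ℝ)/(3/2))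
      ≤ (D.card : ℝ) ^ ((1:ℝ)/3) * (∑ z ∈ D, b z ^ (3:ℝ)) ^ ((1:ℝ)/3) := by
    have h := rpow_le_rpow (sum_nonneg fun z _ => rpow_nonneg (hbnon z) _) H2 (by norm_num : (0:ℝ) ≤ (1:ℝ)/(3/2))
    refine h.trans_eq ?_
    rw [mul_rpow (rpow_nonneg (Nat.cast_nonneg _) _) (rpow_nonneg hsum3b _),
      ← rpow_mul (Nat.cast_nonneg _), ← rpow_mul hsum3b]
    norm_num
  -- extend sums to univ
  have hext1 : (∑ z ∈ D, a z ^ (3:ℝ)) ≤ ∑ z, a z ^ (3:ℝ) :=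
    sum_le_sum_of_subset_of_nonneg (subset_univ _) (fun z _ _ => rpow_nonneg (hanon z) _)
  have hext2 : (∑ z ∈ D, b z ^ (3:ℝ)) ≤ ∑ z, b z ^ (3:ℝ) :=
    sum_le_sum_of_subset_of_nonneg (subset_univ _) (fun z _ _ => rpow_nonneg (hbnon z) _)
  have hfin : ((Finset.univ.filter
        (fun t : α₁ × α₂ =>
          ∃ y : β, ∃ z : γ, (t.1, z) ∈ R1 ∧ (t.2, z) ∈ R2 ∧ (y, z) ∈ S)).card : ℝ)
      ≤ (D.card : ℝ) ^ ((1:ℝ)/3) * (∑ z, a z ^ (3:ℝ)) ^ ((1:ℝ)/3) * (∑ z, b z ^ (3:ℝ)) ^ ((1:ℝ)/3) := by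
    calc _ ≤ ∑ z ∈ D, a z * b z := hstep1
      _ ≤ (∑ z ∈ D, a z ^ (3:ℝ)) ^ ((1:ℝ)/3) * (∑ z ∈ D, b z ^ ((3:ℝ)/2)) ^ ((1:ℝ)/(3/2)) := H1
      _ ≤ (∑ z ∈ D, a z ^ (3:ℝ)) ^ ((1:ℝ)/3) *
          ((D.card : ℝ) ^ ((1:ℝ)/3) * (∑ z ∈ D, b z ^ (3:ℝ)) ^ ((1:ℝ)/3)) := by
          exact mul_le_mul_of_nonneg_left H3 (rpow_nonneg (sum_nonneg fun z _ => rpow_nonneg (hanon z) _) _)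
      _ ≤ (∑ z, a z ^ (3:ℝ)) ^ ((1:ℝ)/3) *
          ((D.card : ℝ) ^ ((1:ℝ)/3) * (∑ z, b z ^ (3:ℝ)) ^ ((1:ℝ)/3)) := by
          refine mul_le_mul (rpow_le_rpow (sum_nonneg fun z _ => rpow_nonneg (hanon z) _) hext1 (by norm_num))
            (mul_le_mul_of_nonneg_left (rpow_le_rpow (sum_nonneg fun z _ => rpow_nonneg (hbnon z) _) hext2 (by norm_num))
              (rpow_nonneg (Nat.cast_nonneg _) _))
            (mul_nonneg (rpow_nonneg (Nat.cast_nonneg _) _) (rpow_nonneg (sum_nonneg fun z _ => rpow_nonneg (hbnon z) _) _))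
            (rpow_nonneg (sum_nonneg fun z _ => rpow_nonneg (hanon z) _) _)
      _ = (D.card : ℝ) ^ ((1:ℝ)/3) * (∑ z, a z ^ (3:ℝ)) ^ ((1:ℝ)/3) * (∑ z, b z ^ (3:ℝ)) ^ ((1:ℝ)/3) := by
          ring
  have ea : (∑ z, a z ^ (3:ℝ)) = ∑ z, ((R1.filter (fun t => t.2 = z)).card : ℝ) ^ 3 := by
    refine Finset.sum_congr rfl fun z _ => ?_
    rw [show (3:ℝ) = ((3:ℕ):ℝ) by norm_num, Real.rpow_natCast]
  have eb : (∑ z, b z ^ (3:ℝ)) = ∑ z, ((R2.filter (fun t => t.2 = z)).card : ℝ) ^ 3 := by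
    refine Finset.sum_congr rfl fun z _ => ?_
    rw [show (3:ℝ) = ((3:ℕ):ℝ) by norm_num, Real.rpow_natCast]
  rw [ea, eb] at hfin
  exact hfin
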